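/- Assume that S(h) : Φ → Φ is continuous for every h ∈ 𝒞 and that the semigroup possesses a compact (𝔹,Σ)-attracting set K ⊆ Φ. Then for every B ∈ 𝔹 the ω-limit set ω(B) is strictly invariant: S(h)(ω(B)) = ω(B) for every h ∈ 𝒞. -/
import Mathlib


open Metric Filter Topology

noncomputable section

/-- The ω-limit set of a set `B` under the multi-parametric semigroup `S`
with time arrow `Sig`. -/
def omegaSet {m : ℕ} {Φ : Type*} [MetricSpace Φ]
    (S : EuclideanSpace ℝ (Fin m) → Φ → Φ) (Sig : Set (EuclideanSpace ℝ (Fin m)))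
    (B : Set Φ) : Set Φ :=
  {u₀ | ∃ (h : ℕ → EuclideanSpace ℝ (Fin m)) (u : ℕ → Φ),
    (∀ n, h n ∈ Sig) ∧
    Tendsto (fun n => infDist (h n) (frontier Sig)) atTop atTop ∧
    (∀ n, u n ∈ B) ∧
    Tendsto (fun n => S (h n) (u n)) atTop (𝓝 u₀)}

/-- `K` is a `(𝔹,Σ)`-attracting set for the semigroup `S`. -/
def IsAttractingSet {m : ℕ} {Φ : Type*} [MetricSpace Φ]
    (S : EuclideanSpace ℝ (Fin m) → Φ → Φ) (Sig : Set (EuclideanSpace ℝ (Fin m)))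
    (Bor : Set (Set Φ)) (K : Set Φ) : Prop :=
  ∀ B ∈ Bor, ∀ ε : ℝ, 0 < ε → ∃ D : ℝ, 0 < D ∧
    ∀ h ∈ Sig, infDist h (frontier Sig) ≥ D → S h '' B ⊆ thickening ε K

/-- If all maps `S h`, `h ∈ 𝒞`, are continuous and the semigroup possesses a compact
`(𝔹,Σ)`-attracting set `K`, then for every `B ∈ 𝔹` the ω-limit set `ω(B)` is strictly
invariant: `S(h)(ω(B)) = ω(B)` for every `h ∈ 𝒞`. -/
lemma mem_of_dist_lt_infDist_frontier {m : ℕ} {Sig : Set (EuclideanSpace ℝ (Fin m))}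
    {x y : EuclideanSpace ℝ (Fin m)} (hx : x ∈ Sig)
    (hlt : dist y x < infDist x (frontier Sig)) : y ∈ Sig := by
  set F := frontier Sig with hF
  set r := infDist x F with hr
  have hr0 : 0 < r := lt_of_le_of_lt dist_nonneg hlt
  have hballF : ∀ z ∈ ball x r, z ∉ F := by
    intro z hz hzF
    have h1 : r ≤ dist x z := infDist_le_dist_of_mem hzF
    rw [mem_ball, dist_comm] at hz
    linarith
  have hxF : x ∉ F := hballF x (mem_ball_self hr0)
  have hxint : x ∈ interior Sig := by
    by_contra hxi
    exact hxF ⟨subset_closure hx, by simpa [interior_compl] using hxi⟩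
  have hsub : ball x r ⊆ interior Sig ∪ interior Sigᶜ := by
    intro z hz
    have hz' : z ∉ closure Sig ∩ closure Sigᶜ := by
      rw [← frontier_eq_closure_inter_closure]; exact hballF z hz
    rcases Classical.em (z ∈ closure Sigᶜ) with hc | hc
    · right
      rw [interior_compl]
      exact fun hcl => hz' ⟨hcl, hc⟩
    · left
      have : z ∈ (closure Sigᶜ)ᶜ := hc
      rwa [closure_compl, compl_compl] at this
  have hball : ball x r ⊆ interior Sig := by
    refine IsPreconnected.subset_left_of_subset_union isOpen_interior isOpen_interior
      ?_ hsub ⟨x, mem_ball_self hr0, hxint⟩ (convex_ball x r).isPreconnected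
    exact Set.disjoint_left.2 fun a ha ha' =>
      (interior_subset ha' : a ∈ Sigᶜ) (interior_subset ha)
  exact interior_subset (hball (mem_ball.2 hlt))

lemma infDist_sub_le' {m : ℕ} (F : Set (EuclideanSpace ℝ (Fin m)))
    (x y : EuclideanSpace ℝ (Fin m)) :
    infDist x F - dist y x ≤ infDist y F := by
  have := infDist_le_infDist_add_dist (s := F) (x := x) (y := y)
  rw [dist_comm] at this
  linarith

theorem omegaSet_strictly_invariant
    {m : ℕ} {Φ : Type*} [MetricSpace Φ] (hm : 1 ≤ m)
    (C Sig : Set (EuclideanSpace ℝ (Fin m)))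
    (S : EuclideanSpace ℝ (Fin m) → Φ → Φ) (Bor : Set (Set Φ))
    (hCclosed : IsClosed C) (hCint : (interior C).Nonempty)
    (hC0 : (0 : EuclideanSpace ℝ (Fin m)) ∈ C)
    (hCadd : ∀ h₁ ∈ C, ∀ h₂ ∈ C, h₁ + h₂ ∈ C)
    (hCcone : ∀ t : ℝ, 0 ≤ t → ∀ h ∈ C, t • h ∈ C)
    (hS0 : S 0 = id)
    (hSadd : ∀ h₁ ∈ C, ∀ h₂ ∈ C, S (h₁ + h₂) = S h₁ ∘ S h₂)
    (hScont : ∀ h ∈ C, Continuous (S h))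
    (hSigne : Sig.Nonempty) (hSigC : Sig ⊆ C)
    (hfr : frontier C ⊆ frontier Sig)
    (hcof : ∀ D : ℝ, 0 < D → ∃ h ∈ Sig, infDist h (frontier Sig) ≥ D)
    (K : Set Φ) (hK : IsCompact K) (hKattr : IsAttractingSet S Sig Bor K)
    (B : Set Φ) (hB : B ∈ Bor) :
    ∀ h ∈ C, S h '' (omegaSet S Sig B) = omegaSet S Sig B := by
  intro h₀ hh₀
  set F := frontier Sig with hFdef
  apply Set.Subset.antisymm
  · -- S h₀ '' ω(B) ⊆ ω(B)
    rintro - ⟨u₀, ⟨g, u, hgS, hgT, huB, hconv⟩, rfl⟩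
    obtain ⟨N, hN⟩ := eventually_atTop.1 (hgT.eventually_gt_atTop ‖h₀‖)
    have hdist : ∀ n, dist (h₀ + g (n + N)) (g (n + N)) = ‖h₀‖ := by
      intro n; rw [dist_eq_norm]; simp
    refine ⟨fun n => h₀ + g (n + N), fun n => u (n + N), fun n => ?_, ?_, fun n => huB _, ?_⟩
    · exact mem_of_dist_lt_infDist_frontier (hgS (n + N))
        (by rw [hdist n]; exact hN (n + N) (Nat.le_add_left N n))
    · have hshift : Tendsto (fun n => infDist (g (n + N)) F) atTop atTop :=
        hgT.comp (tendsto_add_atTop_nat N)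
      refine tendsto_atTop_mono (fun n => ?_)
        (tendsto_atTop_add_const_right atTop (-‖h₀‖) hshift)
      have := infDist_sub_le' F (g (n + N)) (h₀ + g (n + N))
      rw [hdist n] at this
      linarith
    · have hkey : ∀ n, S (h₀ + g (n + N)) (u (n + N)) = S h₀ (S (g (n + N)) (u (n + N))) := by
        intro n; rw [hSadd h₀ hh₀ _ (hSigC (hgS _))]; rfl
      simp only [hkey]
      exact ((hScont h₀ hh₀).tendsto u₀).comp (hconv.comp (tendsto_add_atTop_nat N))
  · -- ω(B) ⊆ S h₀ '' ω(B)
    rintro u₀ ⟨g, u, hgS, hgT, huB, hconv⟩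
    obtain ⟨N, hN⟩ := eventually_atTop.1 (hgT.eventually_gt_atTop ‖h₀‖)
    set p : ℕ → EuclideanSpace ℝ (Fin m) := fun n => g (n + N) - h₀ with hp
    have hdist : ∀ n, dist (p n) (g (n + N)) = ‖h₀‖ := by
      intro n; rw [dist_eq_norm]; simp [hp]
    have hpS : ∀ n, p n ∈ Sig := fun n =>
      mem_of_dist_lt_infDist_frontier (hgS (n + N))
        (by rw [hdist n]; exact hN (n + N) (Nat.le_add_left N n))
    have hpT : Tendsto (fun n => infDist (p n) F) atTop atTop := by
      have hshift : Tendsto (fun n => infDist (g (n + N)) F) atTop atTop :=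
        hgT.comp (tendsto_add_atTop_nat N)
      refine tendsto_atTop_mono (fun n => ?_)
        (tendsto_atTop_add_const_right atTop (-‖h₀‖) hshift)
      have := infDist_sub_le' F (g (n + N)) (p n)
      rw [hdist n] at this
      linarith
    set v : ℕ → Φ := fun n => S (p n) (u (n + N)) with hv
    have hkey : ∀ n, S (g (n + N)) (u (n + N)) = S h₀ (v n) := by
      intro n
      have : h₀ + p n = g (n + N) := by simp [hp]
      rw [← this, hSadd h₀ hh₀ (p n) (hSigC (hpS n))]; rfl
    -- K is nonempty
    have hKne : K.Nonempty := by
      obtain ⟨D, hD, hattr⟩ := hKattr B hB 1 one_pos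
      obtain ⟨g', hg'S, hg'D⟩ := hcof D hD
      have : S g' (u 0) ∈ thickening 1 K := hattr g' hg'S hg'D ⟨u 0, huB 0, rfl⟩
      obtain ⟨z, hzK, -⟩ := mem_thickening_iff.1 this
      exact ⟨z, hzK⟩
    -- infDist (v n) K → 0
    have hv0 : Tendsto (fun n => infDist (v n) K) atTop (𝓝 0) := by
      refine tendsto_order.2 ⟨fun b hb => Eventually.of_forall fun n =>
        lt_of_lt_of_le hb infDist_nonneg, fun b hb => ?_⟩
      obtain ⟨D, hD, hattr⟩ := hKattr B hB b hb
      filter_upwards [hpT.eventually_ge_atTop D] with n hn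
      have hmem : v n ∈ thickening b K := hattr (p n) (hpS n) hn ⟨u (n + N), huB _, rfl⟩
      obtain ⟨z, hzK, hd⟩ := mem_thickening_iff.1 hmem
      exact lt_of_le_of_lt (infDist_le_dist_of_mem hzK) hd
    choose w hwK hwd using fun n => hK.exists_infDist_eq_dist hKne (v n)
    obtain ⟨v₀, hv₀K, φ, hφ, hwconv⟩ := hK.tendsto_subseq hwK
    have hvconv : Tendsto (fun n => v (φ n)) atTop (𝓝 v₀) := by
      rw [tendsto_iff_dist_tendsto_zero]
      refine squeeze_zero (g := fun n => infDist (v (φ n)) K + dist (w (φ n)) v₀)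
        (fun n => dist_nonneg) (fun n => ?_) ?_
      · exact (dist_triangle (v (φ n)) (w (φ n)) v₀).trans
          (by rw [← hwd (φ n)])
      · have h1 : Tendsto (fun n => infDist (v (φ n)) K) atTop (𝓝 0) :=
          hv0.comp hφ.tendsto_atTop
        have h2 : Tendsto (fun n => dist (w (φ n)) v₀) atTop (𝓝 0) := by
          rw [← tendsto_iff_dist_tendsto_zero]; exact hwconv
        simpa using h1.add h2
    refine ⟨v₀, ⟨fun n => p (φ n), fun n => u (φ n + N), fun n => hpS _,
      hpT.comp hφ.tendsto_atTop, fun n => huB _, hvconv⟩, ?_⟩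
    have h1 : Tendsto (fun n => S h₀ (v (φ n))) atTop (𝓝 (S h₀ v₀)) :=
      ((hScont h₀ hh₀).tendsto v₀).comp hvconv
    have h2 : Tendsto (fun n => S h₀ (v (φ n))) atTop (𝓝 u₀) := by
      have := (hconv.comp (tendsto_add_atTop_nat N)).comp hφ.tendsto_atTop
      simp only [Function.comp_def] at this
      simpa only [hkey] using this
    exact tendsto_nhds_unique h1 h2
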